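/- Let X be a real normed space, λ > 0, and exponents 1 < p < 2r < q. Fix u ∈ X with u ≠ 0 and positive real constants A = ‖u‖^p > 0, B = λ |u|_q^q > 0, C = [u]_r^{2r} ≥ 0. Define h(t) = (t^p/p) A − (t^q/q) B + (t^{2r}/(2r)) C for t ≥ 0. Then there exists a unique τ₀ > 0 with h'(τ₀) = 0, i.e., τ₀^{p-1} A − τ₀^{q-1} B + τ₀^{2r-1} C = 0, and τ₀ is the unique global maximum of h on (0,∞). -/

import Mathlib

open Real Set

/-- Fibering lemma on the Nehari manifold: for `1 < p < 2r < q`, `A, B > 0`,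
`C ≥ 0` and `h(t) = (t^p/p)A − (t^q/q)B + (t^{2r}/(2r))C`, there is a unique
`τ₀ > 0` with `τ₀^{p-1}A − τ₀^{q-1}B + τ₀^{2r-1}C = 0`, and `τ₀` is the unique
global maximum of `h` on `(0,∞)`. -/
theorem stmt7 (p q r A B C : ℝ) (hp : 1 < p) (hpr : p < 2 * r) (hrq : 2 * r < q)
    (hA : 0 < A) (hB : 0 < B) (hC : 0 ≤ C) :
    ∃! τ₀ : ℝ, 0 < τ₀ ∧
      τ₀ ^ (p - 1) * A - τ₀ ^ (q - 1) * B + τ₀ ^ (2 * r - 1) * C = 0 ∧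
      ∀ t : ℝ, 0 < t → t ≠ τ₀ →
        t ^ p / p * A - t ^ q / q * B + t ^ (2 * r) / (2 * r) * C <
          τ₀ ^ p / p * A - τ₀ ^ q / q * B + τ₀ ^ (2 * r) / (2 * r) * C := by
  have hp0 : (0:ℝ) < p := lt_trans one_pos hp
  have hr0 : (0:ℝ) < 2 * r := lt_trans hp0 hpr
  have hq0 : (0:ℝ) < q := lt_trans hr0 hrq
  have hpq : p - q < 0 := by linarith
  have hrq' : 2 * r - q < 0 := by linarith
  set h : ℝ → ℝ := fun t => t ^ p / p * A - t ^ q / q * B + t ^ (2 * r) / (2 * r) * C with hh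
  set g : ℝ → ℝ := fun t => A * t ^ (p - q) - B + C * t ^ (2 * r - q) with hg
  -- g is strictly decreasing on (0, ∞)
  have hganti : ∀ x y : ℝ, 0 < x → x < y → g y < g x := by
    intro x y hx hxy
    have h1 : y ^ (p - q) < x ^ (p - q) := Real.rpow_lt_rpow_of_neg hx hxy hpq
    have h2 : y ^ (2 * r - q) ≤ x ^ (2 * r - q) :=
      (Real.rpow_lt_rpow_of_neg hx hxy hrq').le
    have := mul_le_mul_of_nonneg_left h2 hC
    have := mul_lt_mul_of_pos_left h1 hA
    simp only [hg]; linarith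
  -- key identity relating the derivative of h and g
  have hkey : ∀ t : ℝ, 0 < t →
      t ^ (p - 1) * A - t ^ (q - 1) * B + t ^ (2 * r - 1) * C = t ^ (q - 1) * g t := by
    intro t ht
    have e1 : t ^ (q - 1) * t ^ (p - q) = t ^ (p - 1) := by
      rw [← Real.rpow_add ht]; ring_nf
    have e2 : t ^ (q - 1) * t ^ (2 * r - q) = t ^ (2 * r - 1) := by
      rw [← Real.rpow_add ht]; ring_nf
    simp only [hg]
    linear_combination (-A) * e1 - C * e2
  -- derivative of h
  have hderiv : ∀ x : ℝ, 0 < x →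
      HasDerivAt h (x ^ (p - 1) * A - x ^ (q - 1) * B + x ^ (2 * r - 1) * C) x := by
    intro x hx
    have d1 : HasDerivAt (fun t : ℝ => t ^ p / p * A) (x ^ (p - 1) * A) x := by
      have := ((Real.hasDerivAt_rpow_const (x := x) (p := p) (Or.inl hx.ne')).div_const
        p).mul_const A
      rw [mul_div_cancel_left₀ _ hp0.ne'] at this
      exact this
    have d2 : HasDerivAt (fun t : ℝ => t ^ q / q * B) (x ^ (q - 1) * B) x := by
      have := ((Real.hasDerivAt_rpow_const (x := x) (p := q) (Or.inl hx.ne')).div_const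
        q).mul_const B
      rw [mul_div_cancel_left₀ _ hq0.ne'] at this
      exact this
    have d3 : HasDerivAt (fun t : ℝ => t ^ (2 * r) / (2 * r) * C) (x ^ (2 * r - 1) * C) x := by
      have := ((Real.hasDerivAt_rpow_const (x := x) (p := 2 * r) (Or.inl hx.ne')).div_const
        (2 * r)).mul_const C
      rw [mul_div_cancel_left₀ _ hr0.ne'] at this
      exact this
    exact (d1.sub d2).add d3
  -- continuity of h at positive points
  have hcont : ∀ x : ℝ, 0 < x → ContinuousAt h x := fun x hx => (hderiv x hx).continuousAt
  -- existence of a zero of g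
  obtain ⟨τ₀, hτmem, hτeq⟩ : ∃ τ₀, τ₀ ∈ Icc (min 1 ((A / B) ^ (q - p)⁻¹))
      (max 1 (max ((3 * A / B) ^ (q - p)⁻¹) ((3 * (C + 1) / B) ^ (q - 2 * r)⁻¹))) ∧
      g τ₀ = 0 := by
    set a := min 1 ((A / B) ^ (q - p)⁻¹) with ha
    set b := max 1 (max ((3 * A / B) ^ (q - p)⁻¹) ((3 * (C + 1) / B) ^ (q - 2 * r)⁻¹)) with hb
    have hqp : (0:ℝ) < q - p := by linarith
    have hq2r : (0:ℝ) < q - 2 * r := by linarith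
    have ha0 : 0 < a := lt_min one_pos (Real.rpow_pos_of_pos (div_pos hA hB) _)
    have hab : a ≤ b := le_trans (min_le_left _ _) (le_max_left _ _)
    -- g a ≥ 0
    have hga : 0 ≤ g a := by
      have h1 : a ^ (q - p) ≤ A / B := by
        calc a ^ (q - p) ≤ ((A / B) ^ (q - p)⁻¹) ^ (q - p) :=
              Real.rpow_le_rpow ha0.le (min_le_right _ _) hqp.le
          _ = A / B := Real.rpow_inv_rpow (div_pos hA hB).le hqp.ne'
      have h2 : B / A ≤ a ^ (p - q) := by
        have e : a ^ (p - q) = (a ^ (q - p))⁻¹ := by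
          rw [← Real.rpow_neg ha0.le]; ring_nf
        rw [e]
        have := one_div_le_one_div_of_le (Real.rpow_pos_of_pos ha0 _) h1
        · calc B / A = (A / B)⁻¹ := by field_simp
            _ ≤ (a ^ (q - p))⁻¹ := by
              apply inv_anti₀ (Real.rpow_pos_of_pos ha0 _) h1
      have h3 : B ≤ A * a ^ (p - q) := by
        have := mul_le_mul_of_nonneg_left h2 hA.le
        calc B = A * (B / A) := by field_simp
          _ ≤ A * a ^ (p - q) := this
      have h4 : 0 ≤ C * a ^ (2 * r - q) :=
        mul_nonneg hC (Real.rpow_pos_of_pos ha0 _).le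
      simp only [hg]; linarith
    -- g b < 0
    have hgb : g b < 0 := by
      have hb0 : (0:ℝ) < b := lt_of_lt_of_le one_pos (le_max_left _ _)
      have hb1 : (3 * A / B) ^ (q - p)⁻¹ ≤ b :=
        le_trans (le_max_left _ _) (le_max_right _ _)
      have hb2 : (3 * (C + 1) / B) ^ (q - 2 * r)⁻¹ ≤ b :=
        le_trans (le_max_right _ _) (le_max_right _ _)
      have h3A : (0:ℝ) < 3 * A / B := by positivity
      have h3C : (0:ℝ) < 3 * (C + 1) / B := by positivity
      have e1 : 3 * A / B ≤ b ^ (q - p) := by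
        calc 3 * A / B = ((3 * A / B) ^ (q - p)⁻¹) ^ (q - p) :=
              (Real.rpow_inv_rpow h3A.le hqp.ne').symm
          _ ≤ b ^ (q - p) := Real.rpow_le_rpow (by positivity) hb1 hqp.le
      have e2 : 3 * (C + 1) / B ≤ b ^ (q - 2 * r) := by
        calc 3 * (C + 1) / B = ((3 * (C + 1) / B) ^ (q - 2 * r)⁻¹) ^ (q - 2 * r) :=
              (Real.rpow_inv_rpow h3C.le hq2r.ne').symm
          _ ≤ b ^ (q - 2 * r) := Real.rpow_le_rpow (by positivity) hb2 hq2r.le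
      have f1 : A * b ^ (p - q) ≤ B / 3 := by
        have einv : b ^ (p - q) = (b ^ (q - p))⁻¹ := by
          rw [← Real.rpow_neg hb0.le]; ring_nf
        rw [einv]
        have h1 : (b ^ (q - p))⁻¹ ≤ (3 * A / B)⁻¹ :=
          inv_anti₀ h3A e1
        calc A * (b ^ (q - p))⁻¹ ≤ A * (3 * A / B)⁻¹ :=
              mul_le_mul_of_nonneg_left h1 hA.le
          _ = B / 3 := by field_simp
      have f2 : C * b ^ (2 * r - q) ≤ B / 3 := by
        have einv : b ^ (2 * r - q) = (b ^ (q - 2 * r))⁻¹ := by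
          rw [← Real.rpow_neg hb0.le]; ring_nf
        rw [einv]
        have h1 : (b ^ (q - 2 * r))⁻¹ ≤ (3 * (C + 1) / B)⁻¹ :=
          inv_anti₀ h3C e2
        calc C * (b ^ (q - 2 * r))⁻¹ ≤ (C + 1) * (3 * (C + 1) / B)⁻¹ := by
              apply mul_le_mul (by linarith) h1
                (by positivity) (by positivity)
          _ = B / 3 := by field_simp
      simp only [hg]; linarith
    -- IVT
    have hgcont : ContinuousOn g (Icc a b) := by
      intro x hx
      have hx0 : 0 < x := lt_of_lt_of_le ha0 hx.1
      apply ContinuousAt.continuousWithinAt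
      exact (((Real.continuousAt_rpow_const x (p - q) (Or.inl hx0.ne')).const_smul A).sub
        continuousAt_const).add
        ((Real.continuousAt_rpow_const x (2 * r - q) (Or.inl hx0.ne')).const_smul C)
    have h0mem : (0:ℝ) ∈ Icc (g b) (g a) := ⟨hgb.le, hga⟩
    obtain ⟨τ₀, hτ₀, hτeq⟩ := intermediate_value_Icc' hab hgcont h0mem
    exact ⟨τ₀, hτ₀, hτeq⟩
  have ha0 : 0 < min 1 ((A / B) ^ (q - p)⁻¹) :=
    lt_min one_pos (Real.rpow_pos_of_pos (div_pos hA hB) _)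
  have hτ0 : 0 < τ₀ := lt_of_lt_of_le ha0 hτmem.1
  -- the maximum property
  have hmax : ∀ t : ℝ, 0 < t → t ≠ τ₀ → h t < h τ₀ := by
    intro t ht htne
    rcases lt_or_gt_of_ne htne with hlt | hgt
    · -- t < τ₀ : h strictly increasing on [t, τ₀]
      have hmono : StrictMonoOn h (Icc t τ₀) := by
        apply strictMonoOn_of_deriv_pos (convex_Icc t τ₀)
        · intro x hx
          exact (hcont x (lt_of_lt_of_le ht hx.1)).continuousWithinAt
        · intro x hx
          rw [interior_Icc] at hx
          have hx0 : 0 < x := lt_trans ht hx.1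
          rw [(hderiv x hx0).deriv, hkey x hx0]
          have : g τ₀ < g x := hganti x τ₀ hx0 hx.2
          rw [hτeq] at this
          exact mul_pos (Real.rpow_pos_of_pos hx0 _) this
      exact hmono ⟨le_refl t, hlt.le⟩ ⟨hlt.le, le_refl τ₀⟩ hlt
    · -- τ₀ < t : h strictly decreasing on [τ₀, t]
      have hanti : StrictAntiOn h (Icc τ₀ t) := by
        apply strictAntiOn_of_deriv_neg (convex_Icc τ₀ t)
        · intro x hx
          exact (hcont x (lt_of_lt_of_le hτ0 hx.1)).continuousWithinAt
        · intro x hx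
          rw [interior_Icc] at hx
          have hx0 : 0 < x := lt_trans hτ0 hx.1
          rw [(hderiv x hx0).deriv, hkey x hx0]
          have : g x < g τ₀ := hganti τ₀ x hτ0 hx.1
          rw [hτeq] at this
          exact mul_neg_of_pos_of_neg (Real.rpow_pos_of_pos hx0 _) this
      exact hanti ⟨le_refl τ₀, hgt.le⟩ ⟨hgt.le, le_refl t⟩ hgt
  refine ⟨τ₀, ⟨hτ0, ?_, hmax⟩, ?_⟩
  · rw [hkey τ₀ hτ0, hτeq, mul_zero]
  · rintro y ⟨hy0, -, hymax⟩
    by_contra hne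
    have h1 := hymax τ₀ hτ0 (Ne.symm hne)
    have h2 := hmax y hy0 hne
    exact absurd h1 (not_lt.mpr h2.le)
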